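/- Given β ∈ (0, π/2) and h > 0 with h ≠ 1, the map φ(s,t) = (s ± π/4, t/√(1+h²)) (sign chosen + if h < 1, − if h > 1) pulls back the metric d s̃² + (h² cos² s̃ + sin² s̃) d t̃² of the Lawson helicoid Hel₀^h to the metric ds² + ((1 + cos β sin 2s)/2) dt² of the catenoid Cat_β, provided cos β = |1−h²|/(1+h²); in particular the two metrics are locally isometric. -/

import Mathlib

open Real

/-- For β ∈ (0,π/2) and h > 0, h ≠ 1, the map
φ(s,t) = (s ± π/4, t/√(1+h²)) (sign + if h < 1, − if h > 1) pulls back the metric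
d s̃² + (h² cos² s̃ + sin² s̃) d t̃² of the Lawson helicoid Hel₀^h to the metric
ds² + ((1 + cos β sin 2s)/2) dt² of the catenoid Cat_β, provided
cos β = |1−h²|/(1+h²).  In coordinates: the pulled-back coefficient of ds² is 1 and
that of dt² is (h² cos²(s ± π/4) + sin²(s ± π/4))/(1+h²) = (1 + cos β sin 2s)/2. -/
theorem catenoid_locally_isometric_to_lawson_helicoid
    (β h : ℝ) (hβ : β ∈ Set.Ioo 0 (π/2)) (hh : 0 < h) (hne : h ≠ 1)
    (hcos : (h < 1 → Real.cos β = (1 - h^2) / (1 + h^2)) ∧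
            (1 < h → Real.cos β = (h^2 - 1) / (1 + h^2))) :
    ∀ s : ℝ,
      (h^2 * Real.cos (s + (if h < 1 then 1 else -1) * (π/4)) ^ 2
        + Real.sin (s + (if h < 1 then 1 else -1) * (π/4)) ^ 2) / (1 + h^2)
      = (1 + Real.cos β * Real.sin (2*s)) / 2 := by
  obtain ⟨h1, h2⟩ := hcos
  intro s
  have hden : (1:ℝ) + h ^ 2 ≠ 0 := by positivity
  have hs2 : Real.sqrt 2 ^ 2 = 2 := Real.sq_sqrt (by norm_num)
  have hpyth := Real.sin_sq_add_cos_sq s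
  rcases lt_or_gt_of_ne hne with hlt | hgt
  · rw [if_pos hlt, h1 hlt, one_mul, Real.cos_add, Real.sin_add,
      Real.sin_two_mul, Real.cos_pi_div_four, Real.sin_pi_div_four]
    field_simp
    linear_combination ((h^2*(Real.cos s - Real.sin s)^2
      + (Real.sin s + Real.cos s)^2)) * hs2 + 2*(1+h^2) * hpyth
  · rw [if_neg (not_lt.mpr hgt.le), h2 hgt, neg_one_mul, ← sub_eq_add_neg,
      Real.cos_sub, Real.sin_sub, Real.sin_two_mul,
      Real.cos_pi_div_four, Real.sin_pi_div_four]
    field_simp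
    linear_combination ((h^2*(Real.cos s + Real.sin s)^2
      + (Real.sin s - Real.cos s)^2)) * hs2 + 2*(1+h^2) * hpyth
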